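/- Let Ω₀ ∈ ℝ and let X: (−∞, x₂] → ℂ² solve X′ = (−iΩ₀ σ³ + E(x)) X where σ³ = diag(1,−1) and ‖E(x)‖ ≤ c e^{dx} with c, d > 0, X not identically zero. Then there exist f₀⁺, f₀⁻ ∈ ℂ with |f₀⁺|² + |f₀⁻|² ≠ 0 and constants c′, d′ > 0 such that |X(x) − (e^{−iΩ₀x} f₀⁺, e^{iΩ₀x} f₀⁻)| ≤ c′ e^{d′x} for all x ≤ x₂. -/

import Mathlib

open Filter Matrix

private lemma stmt11_expDeriv (a : ℂ) (t : ℝ) :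
    HasDerivAt (fun x : ℝ => Complex.exp (a * x)) (a * Complex.exp (a * t)) t := by
  have h : HasDerivAt (fun x : ℝ => a * (x : ℂ)) a t := by
    simpa using (Complex.ofRealCLM.hasDerivAt (x := t)).const_mul a
  simpa [mul_comm] using h.cexp

private lemma stmt11_mono {x₂ : ℝ} {h h' : ℝ → ℝ}
    (hh : ∀ x ∈ Set.Iic x₂, HasDerivAt h (h' x) x)
    (hpos : ∀ x ∈ Set.Iic x₂, 0 ≤ h' x) : MonotoneOn h (Set.Iic x₂) := by
  apply monotoneOn_of_deriv_nonneg (convex_Iic x₂)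
  · exact fun x hx => (hh x hx).continuousAt.continuousWithinAt
  · rw [interior_Iic]
    exact fun x hx => ((hh x (Set.mem_Iic.mpr (le_of_lt (Set.mem_Iio.mp hx)))).differentiableAt).differentiableWithinAt
  · rw [interior_Iic]
    intro x hx
    rw [(hh x (Set.mem_Iic.mpr (le_of_lt (Set.mem_Iio.mp hx)))).deriv]
    exact hpos x (Set.mem_Iic.mpr (le_of_lt (Set.mem_Iio.mp hx)))

private lemma stmt11_anti {x₂ : ℝ} {h h' : ℝ → ℝ}
    (hh : ∀ x ∈ Set.Iic x₂, HasDerivAt h (h' x) x)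
    (hpos : ∀ x ∈ Set.Iic x₂, h' x ≤ 0) : AntitoneOn h (Set.Iic x₂) := by
  apply antitoneOn_of_deriv_nonpos (convex_Iic x₂)
  · exact fun x hx => (hh x hx).continuousAt.continuousWithinAt
  · rw [interior_Iic]
    exact fun x hx => ((hh x (Set.mem_Iic.mpr (le_of_lt (Set.mem_Iio.mp hx)))).differentiableAt).differentiableWithinAt
  · rw [interior_Iic]
    intro x hx
    rw [(hh x (Set.mem_Iic.mpr (le_of_lt (Set.mem_Iio.mp hx)))).deriv]
    exact hpos x (Set.mem_Iic.mpr (le_of_lt (Set.mem_Iio.mp hx)))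

private lemma stmt11_decay {x₂ C₀ d : ℝ} (hd : 0 < d) (hC : 0 ≤ C₀) {w W : ℝ → ℂ}
    (hw : ∀ x ∈ Set.Iic x₂, HasDerivAt w (W x) x)
    (hWc : ContinuousOn W (Set.Iic x₂))
    (hWb : ∀ x ∈ Set.Iic x₂, ‖W x‖ ≤ C₀ * Real.exp (d * x)) :
    ∀ a b, a ≤ b → b ≤ x₂ → ‖w b - w a‖ ≤ C₀ / d * Real.exp (d * b) := by
  intro a b hab hbx
  have hsub : Set.uIcc a b ⊆ Set.Iic x₂ := by
    rw [Set.uIcc_of_le hab]; exact fun t ht => ht.2.trans hbx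
  have hint : IntervalIntegrable W MeasureTheory.volume a b :=
    (hWc.mono hsub).intervalIntegrable
  have hftc : ∫ t in a..b, W t = w b - w a :=
    intervalIntegral.integral_eq_sub_of_hasDerivAt (fun t ht => hw t (hsub ht)) hint
  rw [← hftc]
  have hgint : IntervalIntegrable (fun t => C₀ * Real.exp (d * t)) MeasureTheory.volume a b :=
    (Continuous.intervalIntegrable (by continuity) a b)
  have hb : ‖∫ t in a..b, W t‖ ≤ |∫ t in a..b, C₀ * Real.exp (d * t)| := by
    apply intervalIntegral.norm_integral_le_abs_of_norm_le _ hgint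
    refine (MeasureTheory.ae_restrict_iff' measurableSet_uIoc).mpr
      (Filter.Eventually.of_forall ?_)
    intro t ht
    apply hWb
    rcases Set.mem_uIoc.mp ht with h | h
    · exact Set.mem_Iic.mpr (h.2.trans hbx)
    · exact Set.mem_Iic.mpr ((h.2.trans hab).trans hbx)
  have hgval : ∫ t in a..b, C₀ * Real.exp (d * t)
      = C₀ / d * Real.exp (d * b) - C₀ / d * Real.exp (d * a) := by
    have hder : ∀ t ∈ Set.uIcc a b,
        HasDerivAt (fun t => C₀ / d * Real.exp (d * t)) (C₀ * Real.exp (d * t)) t := by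
      intro t _
      have h1 : HasDerivAt (fun t : ℝ => d * t) d t := by
        simpa using (hasDerivAt_id t).const_mul d
      have h2 := (h1.exp).const_mul (C₀ / d)
      refine h2.congr_deriv ?_
      rw [mul_comm (Real.exp (d * t)) d, ← mul_assoc, div_mul_cancel₀ C₀ hd.ne']
    rw [intervalIntegral.integral_eq_sub_of_hasDerivAt hder hgint]
  have h1 : Real.exp (d * a) ≤ Real.exp (d * b) :=
    Real.exp_le_exp.mpr (by nlinarith)
  have h2 : 0 ≤ C₀ / d := div_nonneg hC hd.le
  calc ‖∫ t in a..b, W t‖ ≤ |∫ t in a..b, C₀ * Real.exp (d * t)| := hb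
    _ ≤ C₀ / d * Real.exp (d * b) := by
        rw [hgval, abs_of_nonneg (by nlinarith)]
        nlinarith [Real.exp_pos (d * a)]

private lemma stmt11_limit {x₂ C₀ d : ℝ} (hd : 0 < d) {w : ℝ → ℂ}
    (hdec : ∀ a b, a ≤ b → b ≤ x₂ → ‖w b - w a‖ ≤ C₀ * Real.exp (d * b)) :
    ∃ w₀ : ℂ, Tendsto w atBot (nhds w₀) ∧
      ∀ x ≤ x₂, ‖w x - w₀‖ ≤ C₀ * Real.exp (d * x) := by
  set u : ℕ → ℂ := fun n => w (x₂ - n) with hu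
  have hgeo : ∀ n : ℕ, dist (u n) (u (n + 1))
      ≤ (C₀ * Real.exp (d * x₂)) * (Real.exp (-d)) ^ n := by
    intro n
    have hab : x₂ - ((n : ℝ) + 1) ≤ x₂ - n := by linarith
    have hbx : x₂ - (n : ℝ) ≤ x₂ := by linarith [Nat.cast_nonneg (α := ℝ) n]
    have h := hdec (x₂ - ((n : ℝ) + 1)) (x₂ - n) hab hbx
    have heq : dist (u n) (u (n + 1)) = ‖w (x₂ - (n : ℝ)) - w (x₂ - ((n : ℝ) + 1))‖ := by
      rw [dist_eq_norm]; norm_num [hu]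
    rw [heq]
    have hexp : Real.exp (d * (x₂ - (n : ℝ)))
        = Real.exp (d * x₂) * (Real.exp (-d)) ^ n := by
      rw [← Real.exp_nat_mul, ← Real.exp_add]
      ring_nf
    calc ‖w (x₂ - (n : ℝ)) - w (x₂ - ((n : ℝ) + 1))‖
        ≤ C₀ * Real.exp (d * (x₂ - (n : ℝ))) := h
      _ = (C₀ * Real.exp (d * x₂)) * (Real.exp (-d)) ^ n := by rw [hexp]; ring
  have hcs : CauchySeq u :=
    cauchySeq_of_le_geometric _ _ (Real.exp_lt_one_iff.mpr (by linarith)) hgeo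
  obtain ⟨w₀, hw₀⟩ := cauchySeq_tendsto_of_complete hcs
  have hbd : ∀ x ≤ x₂, ‖w x - w₀‖ ≤ C₀ * Real.exp (d * x) := by
    intro x hx
    have htn : Tendsto (fun n : ℕ => ‖w x - u n‖) atTop (nhds ‖w x - w₀‖) :=
      (Tendsto.sub tendsto_const_nhds hw₀).norm
    apply le_of_tendsto htn
    filter_upwards [eventually_ge_atTop ⌈x₂ - x⌉₊] with n hn
    have h2 : (⌈x₂ - x⌉₊ : ℝ) ≤ (n : ℝ) := Nat.cast_le.mpr hn
    have hax : x₂ - (n : ℝ) ≤ x := by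
      have := Nat.le_ceil (x₂ - x); linarith
    exact hdec (x₂ - n) x hax hx
  refine ⟨w₀, ?_, hbd⟩
  have hz : Tendsto (fun x => w x - w₀) atBot (nhds 0) := by
    apply squeeze_zero_norm' (a := fun x => C₀ * Real.exp (d * x))
    · filter_upwards [eventually_le_atBot x₂] with x hx using hbd x hx
    · have h1 : Tendsto (fun x : ℝ => d * x) atBot atBot :=
        (tendsto_const_mul_atBot_of_pos hd).mpr tendsto_id
      have h2 : Tendsto (fun x : ℝ => Real.exp (d * x)) atBot (nhds 0) :=
        Real.tendsto_exp_atBot.comp h1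
      simpa using h2.const_mul C₀
  simpa using hz.add (tendsto_const_nhds (x := w₀))

set_option maxHeartbeats 1000000 in
/-- Oscillatory asymptotics near the horizon (Lemma 1 of the paper, abstract form):
solutions of `X' = (-iΩ₀σ³ + E(x))X` with `‖E(x)‖ ≤ c e^{dx}` approach, up to an
exponentially small error, a plane wave `(e^{-iΩ₀x}f₀⁺, e^{iΩ₀x}f₀⁻)` with
`(f₀⁺, f₀⁻) ≠ 0`. -/
theorem stmt_11 (x₂ c d Ω₀ : ℝ) (hc : 0 < c) (hd : 0 < d)
    (E : ℝ → Matrix (Fin 2) (Fin 2) ℂ)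
    (hEcont : ContinuousOn E (Set.Iic x₂))
    (hEbound : ∀ x ≤ x₂, ∀ i j, ‖E x i j‖ ≤ c * Real.exp (d * x))
    (X : ℝ → Fin 2 → ℂ)
    (hX : ∀ x ≤ x₂, HasDerivAt X
      ((((-Complex.I * (Ω₀ : ℂ)) • (!![1,0;0,-1] : Matrix (Fin 2) (Fin 2) ℂ)
        + E x).mulVec (X x))) x)
    (hne : ∃ x ≤ x₂, X x ≠ 0) :
    ∃ (f₀p f₀m : ℂ), (‖f₀p‖)^2 + (‖f₀m‖)^2 ≠ 0 ∧
      ∃ c' > 0, ∃ d' > 0, ∀ x ≤ x₂,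
        ‖X x - ![Complex.exp (-Complex.I * Ω₀ * x) * f₀p,
                 Complex.exp (Complex.I * Ω₀ * x) * f₀m]‖ ≤ c' * Real.exp (d' * x) := by
  obtain ⟨x₀, hx₀2, hX0⟩ := hne
  set p : ℝ → ℂ := fun t => X t 0 with hpdef
  set q : ℝ → ℂ := fun t => X t 1 with hqdef
  -- component derivatives
  have hp : ∀ x ∈ Set.Iic x₂, HasDerivAt p
      (-(Complex.I * Ω₀) * p x + (E x 0 0 * p x + E x 0 1 * q x)) x := by
    intro x hx
    have h := (hasDerivAt_pi.mp (hX x hx)) 0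
    convert h using 1
    · exact rfl
    simp [Matrix.mulVec, dotProduct, Fin.sum_univ_two, Matrix.add_apply,
      Matrix.smul_apply]
    ring
  have hq : ∀ x ∈ Set.Iic x₂, HasDerivAt q
      ((Complex.I * Ω₀) * q x + (E x 1 0 * p x + E x 1 1 * q x)) x := by
    intro x hx
    have h := (hasDerivAt_pi.mp (hX x hx)) 1
    convert h using 1
    · exact rfl
    simp [Matrix.mulVec, dotProduct, Fin.sum_univ_two, Matrix.add_apply,
      Matrix.smul_apply]
    ring
  -- gauge transformed functions
  set y : ℝ → ℂ := fun t => Complex.exp (Complex.I * Ω₀ * t) * p t with hydef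
  set z : ℝ → ℂ := fun t => Complex.exp (-(Complex.I * Ω₀) * t) * q t with hzdef
  set F : ℝ → ℂ := fun t => Complex.exp (Complex.I * Ω₀ * t)
      * (E t 0 0 * p t + E t 0 1 * q t) with hFdef
  set G : ℝ → ℂ := fun t => Complex.exp (-(Complex.I * Ω₀) * t)
      * (E t 1 0 * p t + E t 1 1 * q t) with hGdef
  have hy : ∀ x ∈ Set.Iic x₂, HasDerivAt y (F x) x := by
    intro x hx
    have h := (stmt11_expDeriv (Complex.I * Ω₀) x).mul (hp x hx)
    refine h.congr_deriv ?_
    simp only [hFdef]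
    ring
  have hz : ∀ x ∈ Set.Iic x₂, HasDerivAt z (G x) x := by
    intro x hx
    have h := (stmt11_expDeriv (-(Complex.I * Ω₀)) x).mul (hq x hx)
    refine h.congr_deriv ?_
    simp only [hGdef]
    ring
  -- unimodularity of the phases
  have habsy : ∀ t : ℝ, ‖y t‖ = ‖p t‖ := by
    intro t
    simp [hydef, norm_mul, Complex.norm_exp]
  have habsz : ∀ t : ℝ, ‖z t‖ = ‖q t‖ := by
    intro t
    simp [hzdef, norm_mul, Complex.norm_exp]
  -- bounds on F, G in terms of |y|, |z|
  have hFb' : ∀ x ∈ Set.Iic x₂, ‖F x‖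
      ≤ c * Real.exp (d * x) * (‖y x‖ + ‖z x‖) := by
    intro x hx
    have h1 := hEbound x hx 0 0
    have h2 := hEbound x hx 0 1
    have hp0 := norm_nonneg (p x)
    have hq0 := norm_nonneg (q x)
    calc ‖F x‖
        = ‖E x 0 0 * p x + E x 0 1 * q x‖ := by
          simp [hFdef, norm_mul, Complex.norm_exp]
      _ ≤ ‖E x 0 0‖ * ‖p x‖
          + ‖E x 0 1‖ * ‖q x‖ := by
          calc ‖E x 0 0 * p x + E x 0 1 * q x‖
              ≤ ‖E x 0 0 * p x‖ + ‖E x 0 1 * q x‖ :=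
                norm_add_le _ _
            _ = _ := by rw [norm_mul, norm_mul]
      _ ≤ c * Real.exp (d * x) * (‖y x‖ + ‖z x‖) := by
          rw [habsy, habsz]
          nlinarith
  have hGb' : ∀ x ∈ Set.Iic x₂, ‖G x‖
      ≤ c * Real.exp (d * x) * (‖y x‖ + ‖z x‖) := by
    intro x hx
    have h1 := hEbound x hx 1 0
    have h2 := hEbound x hx 1 1
    have hp0 := norm_nonneg (p x)
    have hq0 := norm_nonneg (q x)
    calc ‖G x‖
        = ‖E x 1 0 * p x + E x 1 1 * q x‖ := by
          simp [hGdef, norm_mul, Complex.norm_exp]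
      _ ≤ ‖E x 1 0‖ * ‖p x‖
          + ‖E x 1 1‖ * ‖q x‖ := by
          calc ‖E x 1 0 * p x + E x 1 1 * q x‖
              ≤ ‖E x 1 0 * p x‖ + ‖E x 1 1 * q x‖ :=
                norm_add_le _ _
            _ = _ := by rw [norm_mul, norm_mul]
      _ ≤ c * Real.exp (d * x) * (‖y x‖ + ‖z x‖) := by
          rw [habsy, habsz]
          nlinarith
  -- the squared "energy"
  set v : ℝ → ℝ := fun t => (y t).re * (y t).re + (y t).im * (y t).im
      + ((z t).re * (z t).re + (z t).im * (z t).im) with hvdef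
  set vd : ℝ → ℝ := fun t => 2 * ((y t).re * (F t).re + (y t).im * (F t).im)
      + 2 * ((z t).re * (G t).re + (z t).im * (G t).im) with hvddef
  have hvabs : ∀ t : ℝ, v t = (‖y t‖)^2 + (‖z t‖)^2 := by
    intro t
    rw [Complex.sq_norm, Complex.sq_norm, Complex.normSq_apply, Complex.normSq_apply]
  have hvnn : ∀ t : ℝ, 0 ≤ v t := by
    intro t
    rw [hvabs]
    positivity
  have hv : ∀ x ∈ Set.Iic x₂, HasDerivAt v (vd x) x := by
    intro x hx
    have hyre : HasDerivAt (fun t => (y t).re) ((F x).re) x :=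
      Complex.reCLM.hasFDerivAt.comp_hasDerivAt x (hy x hx)
    have hyim : HasDerivAt (fun t => (y t).im) ((F x).im) x :=
      Complex.imCLM.hasFDerivAt.comp_hasDerivAt x (hy x hx)
    have hzre : HasDerivAt (fun t => (z t).re) ((G x).re) x :=
      Complex.reCLM.hasFDerivAt.comp_hasDerivAt x (hz x hx)
    have hzim : HasDerivAt (fun t => (z t).im) ((G x).im) x :=
      Complex.imCLM.hasFDerivAt.comp_hasDerivAt x (hz x hx)
    have h := ((hyre.mul hyre).add (hyim.mul hyim)).add
      ((hzre.mul hzre).add (hzim.mul hzim))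
    refine h.congr_deriv ?_
    simp only [hvddef]
    ring
  -- key scalar inequality
  have key1 : ∀ a b : ℂ, |a.re * b.re + a.im * b.im| ≤ ‖a‖ * ‖b‖ := by
    intro a b
    have h := Complex.abs_re_le_norm ((starRingEnd ℂ) a * b)
    rw [norm_mul, Complex.norm_conj] at h
    simpa [Complex.mul_re] using h
  have hvdb : ∀ x ∈ Set.Iic x₂, |vd x| ≤ 4 * c * Real.exp (d * x) * v x := by
    intro x hx
    have hay : 0 ≤ ‖y x‖ := norm_nonneg _
    have haz : 0 ≤ ‖z x‖ := norm_nonneg _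
    have h1 : |vd x| ≤ 2 * (‖y x‖ * ‖F x‖)
        + 2 * (‖z x‖ * ‖G x‖) := by
      have k1 := key1 (y x) (F x)
      have k2 := key1 (z x) (G x)
      calc |vd x| ≤ |2 * ((y x).re * (F x).re + (y x).im * (F x).im)|
            + |2 * ((z x).re * (G x).re + (z x).im * (G x).im)| := abs_add_le _ _
        _ ≤ 2 * (‖y x‖ * ‖F x‖)
            + 2 * (‖z x‖ * ‖G x‖) := by
            rw [abs_mul, abs_mul]
            simp only [abs_two]
            nlinarith
    have h2 := hFb' x hx
    have h3 := hGb' x hx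
    have hF0 : 0 ≤ ‖F x‖ := norm_nonneg _
    have hG0 : 0 ≤ ‖G x‖ := norm_nonneg _
    have he : 0 < Real.exp (d * x) := Real.exp_pos _
    rw [hvabs x]
    nlinarith [mul_nonneg (mul_nonneg hc.le he.le)
        (sq_nonneg (‖y x‖ - ‖z x‖)),
      mul_le_mul_of_nonneg_left h2 (by positivity : (0:ℝ) ≤ 2 * ‖y x‖),
      mul_le_mul_of_nonneg_left h3 (by positivity : (0:ℝ) ≤ 2 * ‖z x‖)]
  -- the exponential weight
  set Ψ : ℝ → ℝ := fun t => 4 * c / d * Real.exp (d * t) with hΨdef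
  have hΨ : ∀ x : ℝ, HasDerivAt Ψ (4 * c * Real.exp (d * x)) x := by
    intro x
    have h1 : HasDerivAt (fun t : ℝ => d * t) d x := by
      simpa using (hasDerivAt_id x).const_mul d
    have h2 := (h1.exp).const_mul (4 * c / d)
    refine h2.congr_deriv ?_
    rw [mul_comm (Real.exp (d * x)) d, ← mul_assoc, div_mul_cancel₀ (4 * c) hd.ne']
  have hΨnn : ∀ t : ℝ, 0 ≤ Ψ t := by
    intro t
    simp only [hΨdef]
    positivity
  -- upper bound for v
  have monoh : MonotoneOn (fun t => v t * Real.exp (Ψ t)) (Set.Iic x₂) := by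
    apply stmt11_mono (h' := fun x => vd x * Real.exp (Ψ x)
      + v x * (Real.exp (Ψ x) * (4 * c * Real.exp (d * x))))
    · exact fun x hx => (hv x hx).mul ((hΨ x).exp)
    · intro x hx
      have h1 := (abs_le.mp (hvdb x hx)).1
      have h2 := Real.exp_pos (Ψ x)
      nlinarith
  have antik : AntitoneOn (fun t => v t * Real.exp (-Ψ t)) (Set.Iic x₂) := by
    apply stmt11_anti (h' := fun x => vd x * Real.exp (-Ψ x)
      + v x * (Real.exp (-Ψ x) * (-(4 * c * Real.exp (d * x)))))
    · exact fun x hx => (hv x hx).mul (((hΨ x).neg).exp)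
    · intro x hx
      have h1 := (abs_le.mp (hvdb x hx)).2
      have h2 := Real.exp_pos (-Ψ x)
      nlinarith
  have hub : ∀ x ∈ Set.Iic x₂, v x ≤ v x₂ * Real.exp (Ψ x₂) := by
    intro x hx
    have h : v x * Real.exp (Ψ x) ≤ v x₂ * Real.exp (Ψ x₂) :=
      monoh hx (Set.mem_Iic.mpr le_rfl) hx
    have h1 : (1 : ℝ) ≤ Real.exp (Ψ x) := Real.one_le_exp (hΨnn x)
    nlinarith [hvnn x, mul_le_mul_of_nonneg_left h1 (hvnn x)]
  -- lower bound near -∞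
  have hvx₀ : 0 < v x₀ := by
    have hne' : p x₀ ≠ 0 ∨ q x₀ ≠ 0 := by
      by_contra hcon
      push_neg at hcon
      apply hX0
      funext i
      fin_cases i
      · exact hcon.1
      · exact hcon.2
    rw [hvabs]
    rcases hne' with h | h
    · have : 0 < ‖y x₀‖ := by rw [habsy]; exact norm_pos_iff.mpr h
      nlinarith [sq_nonneg (‖z x₀‖)]
    · have : 0 < ‖z x₀‖ := by rw [habsz]; exact norm_pos_iff.mpr h
      nlinarith [sq_nonneg (‖y x₀‖)]
  set m : ℝ := v x₀ * Real.exp (-Ψ x₀) with hmdef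
  have hmpos : 0 < m := by positivity
  have hlb : ∀ x ≤ x₀, m ≤ v x := by
    intro x hx
    have hxx₂ : x ∈ Set.Iic x₂ := Set.mem_Iic.mpr (hx.trans hx₀2)
    have h := antik hxx₂ (Set.mem_Iic.mpr hx₀2) hx
    have h1 : Real.exp (-Ψ x) ≤ 1 := Real.exp_le_one_iff.mpr (by linarith [hΨnn x])
    simp only [hmdef] at *
    nlinarith [hvnn x]
  -- uniform bound
  set B : ℝ := Real.sqrt (v x₂ * Real.exp (Ψ x₂)) with hBdef
  have hBnn : 0 ≤ B := Real.sqrt_nonneg _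
  have hBsq : B ^ 2 = v x₂ * Real.exp (Ψ x₂) := by
    exact Real.sq_sqrt (mul_nonneg (hvnn x₂) (Real.exp_pos _).le)
  have hyzb : ∀ x ∈ Set.Iic x₂, ‖y x‖ + ‖z x‖ ≤ 2 * B := by
    intro x hx
    have h1 := hub x hx
    have h2 : (‖y x‖ + ‖z x‖)^2 ≤ 2 * v x := by
      rw [hvabs]
      nlinarith [sq_nonneg (‖y x‖ - ‖z x‖)]
    have hay : 0 ≤ ‖y x‖ := norm_nonneg _
    have haz : 0 ≤ ‖z x‖ := norm_nonneg _
    nlinarith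
  set C₀ : ℝ := 2 * c * B + 1 with hC₀def
  have hC₀pos : 0 < C₀ := by positivity
  have hstep : ∀ x : ℝ, c * Real.exp (d * x) * (2 * B) ≤ C₀ * Real.exp (d * x) := by
    intro x
    have he := Real.exp_pos (d * x)
    rw [hC₀def]
    have : c * Real.exp (d * x) * (2 * B) = (2 * c * B) * Real.exp (d * x) := by ring
    rw [this]
    have h9 : (2 * c * B) * Real.exp (d * x) + 0 ≤ (2 * c * B) * Real.exp (d * x)
        + 1 * Real.exp (d * x) := by
      have : (0:ℝ) ≤ 1 * Real.exp (d * x) := by positivity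
      linarith
    calc (2 * c * B) * Real.exp (d * x) = (2 * c * B) * Real.exp (d * x) + 0 := by ring
      _ ≤ (2 * c * B) * Real.exp (d * x) + 1 * Real.exp (d * x) := h9
      _ = (2 * c * B + 1) * Real.exp (d * x) := by ring
  have hFb : ∀ x ∈ Set.Iic x₂, ‖F x‖ ≤ C₀ * Real.exp (d * x) := by
    intro x hx
    have h2 := hyzb x hx
    calc ‖F x‖
        ≤ c * Real.exp (d * x) * (‖y x‖ + ‖z x‖) := hFb' x hx
      _ ≤ c * Real.exp (d * x) * (2 * B) :=
          mul_le_mul_of_nonneg_left h2 (by positivity)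
      _ ≤ C₀ * Real.exp (d * x) := hstep x
  have hGb : ∀ x ∈ Set.Iic x₂, ‖G x‖ ≤ C₀ * Real.exp (d * x) := by
    intro x hx
    have h2 := hyzb x hx
    calc ‖G x‖
        ≤ c * Real.exp (d * x) * (‖y x‖ + ‖z x‖) := hGb' x hx
      _ ≤ c * Real.exp (d * x) * (2 * B) :=
          mul_le_mul_of_nonneg_left h2 (by positivity)
      _ ≤ C₀ * Real.exp (d * x) := hstep x
  -- continuity for the FTC step
  have hpc : ContinuousOn p (Set.Iic x₂) := fun t ht =>
    ((hp t ht).continuousAt).continuousWithinAt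
  have hqc : ContinuousOn q (Set.Iic x₂) := fun t ht =>
    ((hq t ht).continuousAt).continuousWithinAt
  have hEij : ∀ i j, ContinuousOn (fun t => E t i j) (Set.Iic x₂) := by
    intro i j
    exact ((continuous_apply j).comp (continuous_apply i)).comp_continuousOn hEcont
  have hexp1 : Continuous (fun t : ℝ => Complex.exp (Complex.I * Ω₀ * t)) := by
    continuity
  have hexp2 : Continuous (fun t : ℝ => Complex.exp (-(Complex.I * Ω₀) * t)) := by
    continuity
  have hFcont : ContinuousOn F (Set.Iic x₂) :=
    (hexp1.continuousOn).mul (((hEij 0 0).mul hpc).add ((hEij 0 1).mul hqc))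
  have hGcont : ContinuousOn G (Set.Iic x₂) :=
    (hexp2.continuousOn).mul (((hEij 1 0).mul hpc).add ((hEij 1 1).mul hqc))
  -- decay of increments and the limits
  have hdy := stmt11_decay hd hC₀pos.le hy hFcont hFb
  have hdz := stmt11_decay hd hC₀pos.le hz hGcont hGb
  obtain ⟨y₀, hty, hby⟩ := stmt11_limit hd hdy
  obtain ⟨z₀, htz, hbz⟩ := stmt11_limit hd hdz
  -- the limit is nonzero
  have htv : Tendsto v atBot (nhds (y₀.re * y₀.re + y₀.im * y₀.im
      + (z₀.re * z₀.re + z₀.im * z₀.im))) := by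
    have h1 : Tendsto (fun t => (y t).re) atBot (nhds y₀.re) :=
      (Complex.continuous_re.tendsto y₀).comp hty
    have h2 : Tendsto (fun t => (y t).im) atBot (nhds y₀.im) :=
      (Complex.continuous_im.tendsto y₀).comp hty
    have h3 : Tendsto (fun t => (z t).re) atBot (nhds z₀.re) :=
      (Complex.continuous_re.tendsto z₀).comp htz
    have h4 : Tendsto (fun t => (z t).im) atBot (nhds z₀.im) :=
      (Complex.continuous_im.tendsto z₀).comp htz
    exact ((h1.mul h1).add (h2.mul h2)).add ((h3.mul h3).add (h4.mul h4))
  have hL : m ≤ y₀.re * y₀.re + y₀.im * y₀.im + (z₀.re * z₀.re + z₀.im * z₀.im) := by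
    apply ge_of_tendsto htv
    filter_upwards [eventually_le_atBot x₀] with x hx using hlb x hx
  have hLabs : (‖y₀‖)^2 + (‖z₀‖)^2
      = y₀.re * y₀.re + y₀.im * y₀.im + (z₀.re * z₀.re + z₀.im * z₀.im) := by
    rw [Complex.sq_norm, Complex.sq_norm, Complex.normSq_apply, Complex.normSq_apply]
  refine ⟨y₀, z₀, ?_, C₀ / d, by positivity, d, hd, ?_⟩
  · rw [hLabs]
    exact ne_of_gt (lt_of_lt_of_le hmpos hL)
  · intro x hx
    rw [pi_norm_le_iff_of_nonneg (by positivity)]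
    intro i
    have hxm : x ∈ Set.Iic x₂ := Set.mem_Iic.mpr hx
    have hmm1 : Complex.exp (-(Complex.I * Ω₀ * x)) * Complex.exp (Complex.I * Ω₀ * x) = 1 := by
      rw [← Complex.exp_add]
      simp
    have hmm2 : Complex.exp (Complex.I * Ω₀ * x) * Complex.exp (-(Complex.I * Ω₀) * x) = 1 := by
      rw [← Complex.exp_add]
      norm_num
    fin_cases i
    · have heq : X x 0 - Complex.exp (-Complex.I * Ω₀ * x) * y₀
          = Complex.exp (-(Complex.I * Ω₀ * x)) * (y x - y₀) := by
        simp only [hydef]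
        rw [show -Complex.I * (Ω₀:ℂ) * (x:ℝ) = -(Complex.I * Ω₀ * x) by ring]
        have : (p x : ℂ) = X x 0 := rfl
        linear_combination (-(X x 0)) * hmm1
      simp only [Fin.zero_eta, Pi.sub_apply, Matrix.cons_val_zero]
      rw [heq, norm_mul]
      have : ‖Complex.exp (-(Complex.I * Ω₀ * (x:ℝ)))‖ = 1 := by
          simp [Complex.norm_exp]
      rw [this, one_mul]
      exact hby x hx
    · have heq : X x 1 - Complex.exp (Complex.I * Ω₀ * x) * z₀
          = Complex.exp (Complex.I * Ω₀ * x) * (z x - z₀) := by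
        simp only [hzdef]
        have : (q x : ℂ) = X x 1 := rfl
        linear_combination (-(X x 1)) * hmm2
      simp only [Fin.mk_one, Pi.sub_apply, Matrix.cons_val_one, Matrix.head_cons, Matrix.cons_val_zero]
      rw [heq, norm_mul]
      have : ‖Complex.exp (Complex.I * Ω₀ * (x:ℝ))‖ = 1 := by
          simp [Complex.norm_exp]
      rw [this, one_mul]
      exact hbz x hx
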